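/- Let ω ∈ ℂ be a primitive T-th root of unity and let k ∈ ℤ with [k] := k mod T taken in {0,1,…,T-1}. Then ∑_{r=1}^{T-1} (ω^{-kr} - 1)/(ω^r - 1) = [k]. -/

import Mathlib

theorem cyclotomic_residue_mod_sum (T : ℕ) (hT : 1 ≤ T) (ω : ℂ)
    (hω : IsPrimitiveRoot ω T) (k : ℤ) :
    ∑ r ∈ Finset.Ico 1 T, (ω ^ (-(k * (r : ℤ))) - 1) / (ω ^ (r : ℤ) - 1)
      = ((k % (T : ℤ) : ℤ) : ℂ) := by
  have hT0 : (T : ℤ) ≠ 0 := by exact_mod_cast (by omega : T ≠ 0)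
  have hne : ω ≠ 0 := hω.ne_zero (by omega)
  have hωT : ω ^ T = 1 := hω.pow_eq_one
  set m : ℕ := ((-k) % T).toNat with hm
  have h0 := Int.emod_nonneg (-k) hT0
  have hmlt : m < T := by
    have := Int.emod_lt_of_pos (-k) (by exact_mod_cast hT : (0:ℤ) < (T:ℤ))
    omega
  have key : ω ^ (-k : ℤ) = ω ^ m := by
    conv_lhs => rw [← Int.emod_add_mul_ediv (-k) T]
    rw [zpow_add₀ hne, zpow_mul]
    rw [show ω ^ (T:ℤ) = 1 by rw [zpow_natCast, hωT]]
    rw [one_zpow, mul_one, ← Int.toNat_of_nonneg h0, zpow_natCast]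
  have step1 : ∀ r ∈ Finset.Ico 1 T,
      (ω ^ (-(k * (r : ℤ))) - 1) / (ω ^ (r : ℤ) - 1)
        = ∑ j ∈ Finset.range m, (ω ^ j) ^ r := by
    intro r hr
    simp only [Finset.mem_Ico] at hr
    have hr1 : ω ^ r ≠ 1 := hω.pow_ne_one_of_pos_of_lt (by omega) hr.2
    have hden : ω ^ (r:ℤ) - 1 ≠ 0 := by
      rw [zpow_natCast]; exact sub_ne_zero.mpr hr1
    rw [div_eq_iff hden]
    have hx : ω ^ (-(k * (r:ℤ))) = (ω ^ r) ^ m := by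
      rw [← neg_mul, zpow_mul, key, zpow_natCast, pow_right_comm]
    rw [hx, zpow_natCast]
    simp_rw [pow_right_comm ω _ r]
    rw [geom_sum_mul]
  rw [Finset.sum_congr rfl step1, Finset.sum_comm]
  have inner : ∀ j ∈ Finset.range m, ∑ r ∈ Finset.Ico 1 T, (ω ^ j) ^ r
      = if j = 0 then ((T:ℂ) - 1) else -1 := by
    intro j hj
    simp only [Finset.mem_range] at hj
    by_cases hj0 : j = 0
    · subst hj0
      simp only [pow_zero, one_pow, Finset.sum_const, Nat.card_Ico, nsmul_eq_mul,
        mul_one, if_pos]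
      push_cast [Nat.cast_sub hT]
      ring
    · rw [if_neg hj0]
      have hx1 : ω ^ j ≠ 1 :=
        hω.pow_ne_one_of_pos_of_lt hj0 (lt_trans hj hmlt)
      have hsum : ∑ r ∈ Finset.range T, (ω ^ j) ^ r = 0 := by
        have hg := geom_sum_mul (ω ^ j) T
        have hxT : (ω ^ j) ^ T = 1 := by
          rw [← pow_mul, mul_comm, pow_mul, hωT, one_pow]
        rw [hxT, sub_self] at hg
        rcases mul_eq_zero.mp hg with h | h
        · exact h
        · exact absurd (sub_eq_zero.mp h) hx1
      rw [Finset.range_eq_Ico, Finset.sum_eq_sum_Ico_succ_bot (by omega : 0 < T)] at hsum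
      simp only [pow_zero] at hsum
      linear_combination hsum
  rw [Finset.sum_congr rfl inner]
  have hsplit : ∀ j : ℕ, (if j = 0 then ((T:ℂ) - 1) else -1)
      = (if j = 0 then (T:ℂ) else 0) + (-1) := by
    intro j; by_cases h : j = 0 <;> simp [h]; ring
  simp_rw [hsplit]
  rw [Finset.sum_add_distrib, Finset.sum_const, Finset.card_range]
  have hdvd : (T:ℤ) ∣ (k % ↑T + (-k) % ↑T) := by
    have h1 := Int.emod_add_mul_ediv k T
    have h2 := Int.emod_add_mul_ediv (-k) T
    exact ⟨-(k / ↑T) - (-k / ↑T), by linear_combination h1 + h2⟩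
  have hk0 := Int.emod_nonneg k hT0
  have hklt := Int.emod_lt_of_pos k (by exact_mod_cast hT : (0:ℤ) < (T:ℤ))
  have hmklt := Int.emod_lt_of_pos (-k) (by exact_mod_cast hT : (0:ℤ) < (T:ℤ))
  have hrel : k % (T:ℤ) + (-k) % (T:ℤ) = 0 ∨ k % (T:ℤ) + (-k) % (T:ℤ) = T := by
    obtain ⟨c, hc⟩ := hdvd
    have hc01 : c = 0 ∨ c = 1 := by
      rcases lt_trichotomy c 0 with h | h | h
      · exfalso; nlinarith [hT, (by exact_mod_cast hT : (1:ℤ) ≤ (T:ℤ))]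
      · left; exact h
      · by_contra hcontra
        push_neg at hcontra
        have : 2 ≤ c := by omega
        nlinarith [(by exact_mod_cast hT : (1:ℤ) ≤ (T:ℤ))]
    rcases hc01 with h | h <;> [left; right] <;> simp [h] at hc ⊢ <;> omega
  by_cases hm0 : m = 0
  · have : k % (T:ℤ) = 0 := by rcases hrel with h | h <;> omega
    simp [hm0, this]
  · rw [Finset.sum_ite_eq' (Finset.range m) 0 (fun _ => (T:ℂ))]
    rw [if_pos (Finset.mem_range.mpr (Nat.pos_of_ne_zero hm0))]
    have hkm : k % (T:ℤ) = (T:ℤ) - m := by rcases hrel with h | h <;> omega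
    rw [hkm]
    push_cast
    ring
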